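/- Let G be an irregular Tanner graph whose variable-node degrees all lie in {d1,...,dℓ} with minimum degree d1 = γ, with no 4-cycles and all 8-cycles chordless. Then every (a,b) elementary trapping set with b < a satisfies a ≥ 2γ − 2. -/

import Mathlib

open SimpleGraph Finset

/-- A cycle (given as a closed walk) in a graph has a chord if either there is an
edge of the graph between two vertices of the cycle that is not an edge of the cycle,
or there is a vertex outside the cycle adjacent to two distinct vertices of the cycle. -/
def HasChord {V : Type*} (G : SimpleGraph V) {v : V} (c : G.Walk v v) : Prop :=
  (∃ x ∈ c.support, ∃ y ∈ c.support, G.Adj x y ∧ s(x, y) ∉ c.edges) ∨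
  (∃ w, w ∉ c.support ∧ ∃ x ∈ c.support, ∃ y ∈ c.support, x ≠ y ∧ G.Adj w x ∧ G.Adj w y)


private lemma ets_aux_cycle4 {V : Type*} (G : SimpleGraph V) (v c u c' : V)
    (h1 : v ≠ c) (h2 : v ≠ u) (h3 : v ≠ c') (hcu : c ≠ u) (h5 : c ≠ c') (h6 : u ≠ c')
    (a1 : G.Adj v c) (a2 : G.Adj c u) (a3 : G.Adj u c') (a4 : G.Adj c' v) :
    ((Walk.cons a1 (Walk.cons a2 (Walk.cons a3 (Walk.cons a4 Walk.nil)))) : G.Walk v v).IsCycle := by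
  simp [Walk.isCycle_def, Walk.isTrail_def, Sym2.eq_iff, List.nodup_cons]
  tauto

private lemma ets_aux_cycle8 {V : Type*} (G : SimpleGraph V) (v c1 x c2 u c3 y c4 : V)
    (hvc1 : v ≠ c1) (hvx : v ≠ x) (hvc2 : v ≠ c2) (hvu : v ≠ u) (hvc3 : v ≠ c3)
    (hvy : v ≠ y) (hvc4 : v ≠ c4)
    (hc1x : c1 ≠ x) (hc1c2 : c1 ≠ c2) (hc1u : c1 ≠ u) (hc1c3 : c1 ≠ c3) (hc1y : c1 ≠ y)
    (hc1c4 : c1 ≠ c4)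
    (hxc2 : x ≠ c2) (hxu : x ≠ u) (hxc3 : x ≠ c3) (hxy : x ≠ y) (hxc4 : x ≠ c4)
    (hc2u : c2 ≠ u) (hc2c3 : c2 ≠ c3) (hc2y : c2 ≠ y) (hc2c4 : c2 ≠ c4)
    (huc3 : u ≠ c3) (huy : u ≠ y) (huc4 : u ≠ c4)
    (hc3y : c3 ≠ y) (hc3c4 : c3 ≠ c4)
    (hyc4 : y ≠ c4)
    (a1 : G.Adj v c1) (a2 : G.Adj c1 x) (a3 : G.Adj x c2) (a4 : G.Adj c2 u)
    (a5 : G.Adj u c3) (a6 : G.Adj c3 y) (a7 : G.Adj y c4) (a8 : G.Adj c4 v) :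
    ((Walk.cons a1 (Walk.cons a2 (Walk.cons a3 (Walk.cons a4 (Walk.cons a5 (Walk.cons a6
      (Walk.cons a7 (Walk.cons a8 Walk.nil)))))))) : G.Walk v v).IsCycle := by
  simp [Walk.isCycle_def, Walk.isTrail_def, Sym2.eq_iff, List.nodup_cons]
  tauto

theorem stmt_16 {V : Type*} [Fintype V] [DecidableEq V]
    (G : SimpleGraph V) [DecidableRel G.Adj]
    (isVar : V → Prop) [DecidablePred isVar]
    (hbip : ∀ x y, G.Adj x y → (isVar x ↔ ¬ isVar y))
    (D : Finset ℕ) (γ : ℕ) (hγD : γ ∈ D) (hγmin : ∀ d ∈ D, γ ≤ d)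
    (hdegV : ∀ v, isVar v → G.degree v ∈ D)
    (hdegC : ∀ w, ¬ isVar w → G.degree w = 1 ∨ G.degree w = 2)
    (h4 : ∀ (v : V) (c : G.Walk v v), c.IsCycle → c.length ≠ 4)
    (h8 : ∀ (v : V) (c : G.Walk v v), c.IsCycle → c.length = 8 → ¬ HasChord G c)
    (a b : ℕ)
    (ha : a = (univ.filter isVar).card)
    (hb : b = (univ.filter (fun w => ¬ isVar w ∧ G.degree w = 1)).card)
    (hba : b < a) :
    2 * γ - 2 ≤ a := by
  classical
  have nv : ∀ p q : V, isVar p → ¬ isVar q → p ≠ q := fun p q hp hq h => hq (h ▸ hp)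
  have varOf : ∀ c z : V, ¬ isVar c → G.Adj c z → isVar z := fun c z hc h =>
    Classical.byContradiction (fun hz => hc ((hbip c z h).mpr hz))
  -- a degree-1 check has a unique neighbor
  have uniqN : ∀ c : V, G.degree c = 1 → ∀ p q, G.Adj c p → G.Adj c q → p = q := by
    intro c hc p q hp hq
    have hcard : (G.neighborFinset c).card ≤ 1 := by
      rw [card_neighborFinset_eq_degree, hc]
    exact Finset.card_le_one.mp hcard p (by simpa [mem_neighborFinset] using hp)
      q (by simpa [mem_neighborFinset] using hq)
  -- a check cannot be adjacent to three distinct vertices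
  have L2 : ∀ c p q r : V, ¬ isVar c → G.Adj c p → G.Adj c q → G.Adj c r →
      p ≠ q → p ≠ r → q ≠ r → False := by
    intro c p q r hc hp hq hr hpq hpr hqr
    have hsub : ({p, q, r} : Finset V) ⊆ G.neighborFinset c := by
      intro z hz
      simp only [Finset.mem_insert, Finset.mem_singleton] at hz
      rcases hz with h | h | h <;> subst h <;> simpa [mem_neighborFinset]
    have h3 : ({p, q, r} : Finset V).card = 3 := by
      rw [Finset.card_insert_of_notMem (by simp [hpq, hpr]),
        Finset.card_insert_of_notMem (by simp [hqr]), Finset.card_singleton]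
    have hle := Finset.card_le_card hsub
    rw [h3, card_neighborFinset_eq_degree] at hle
    rcases hdegC c hc with h | h <;> omega
  -- no two distinct checks joining the same pair of distinct variables (no 4-cycles)
  have L3 : ∀ v u c c' : V, isVar v → isVar u → ¬ isVar c → ¬ isVar c' → v ≠ u → c ≠ c' →
      G.Adj v c → G.Adj v c' → G.Adj u c → G.Adj u c' → False := by
    intro v u c c' hv hu hc hc' hvu hcc' avc avc' auc auc'
    have n1 := nv v c hv hc
    have n2 := nv v c' hv hc'
    have n3 := nv u c hu hc
    have n4 := nv u c' hu hc'
    have hcyc : ((Walk.cons avc (Walk.cons auc.symm (Walk.cons auc'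
        (Walk.cons avc'.symm Walk.nil)))) : G.Walk v v).IsCycle :=
      ets_aux_cycle4 G v c u c' n1 hvu n2 (fun h => n3 h.symm) hcc' n4
        avc auc.symm auc' avc'.symm
    exact h4 v _ hcyc (by simp)
  -- a normal-graph 4-cycle with a chord gives a contradiction (chordless 8-cycles)
  have L8 : ∀ v u x y c0 c1 c2 c3 c4 : V, isVar v → isVar u → isVar x → isVar y →
      ¬ isVar c0 → ¬ isVar c1 → ¬ isVar c2 → ¬ isVar c3 → ¬ isVar c4 →
      v ≠ u → v ≠ x → v ≠ y → u ≠ x → u ≠ y → x ≠ y →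
      G.Adj c0 v → G.Adj c0 u → G.Adj c1 v → G.Adj c1 x → G.Adj c2 x → G.Adj c2 u →
      G.Adj c3 u → G.Adj c3 y → G.Adj c4 y → G.Adj c4 v → False := by
    intro v u x y c0 c1 c2 c3 c4 hv hu hx hy hk0 hk1 hk2 hk3 hk4
      hvu hvx hvy hux huy hxy b0v b0u b1v b1x b2x b2u b3u b3y b4y b4v
    have d12 : c1 ≠ c2 := by rintro rfl; exact L2 c1 v x u hk1 b1v b1x b2u hvx hvu hux.symm
    have d13 : c1 ≠ c3 := by rintro rfl; exact L2 c1 v x u hk1 b1v b1x b3u hvx hvu hux.symm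
    have d14 : c1 ≠ c4 := by rintro rfl; exact L2 c1 v x y hk1 b1v b1x b4y hvx hvy hxy
    have d23 : c2 ≠ c3 := by rintro rfl; exact L2 c2 x u y hk2 b2x b2u b3y hux.symm hxy huy
    have d24 : c2 ≠ c4 := by rintro rfl; exact L2 c2 x u v hk2 b2x b2u b4v hux.symm hvx.symm hvu.symm
    have d34 : c3 ≠ c4 := by rintro rfl; exact L2 c3 u y v hk3 b3u b3y b4v huy hvu.symm hvy.symm
    have d01 : c0 ≠ c1 := by rintro rfl; exact L2 c0 v u x hk0 b0v b0u b1x hvu hvx hux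
    have d02 : c0 ≠ c2 := by rintro rfl; exact L2 c0 v u x hk0 b0v b0u b2x hvu hvx hux
    have d03 : c0 ≠ c3 := by rintro rfl; exact L2 c0 v u y hk0 b0v b0u b3y hvu hvy huy
    have d04 : c0 ≠ c4 := by rintro rfl; exact L2 c0 v u y hk0 b0v b0u b4y hvu hvy huy
    have nvc1 := nv v c1 hv hk1
    have nvc2 := nv v c2 hv hk2
    have nvc3 := nv v c3 hv hk3
    have nvc4 := nv v c4 hv hk4
    have nvc0 := nv v c0 hv hk0
    have nuc1 := nv u c1 hu hk1
    have nuc2 := nv u c2 hu hk2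
    have nuc3 := nv u c3 hu hk3
    have nuc4 := nv u c4 hu hk4
    have nuc0 := nv u c0 hu hk0
    have nxc1 := nv x c1 hx hk1
    have nxc2 := nv x c2 hx hk2
    have nxc3 := nv x c3 hx hk3
    have nxc4 := nv x c4 hx hk4
    have nxc0 := nv x c0 hx hk0
    have nyc1 := nv y c1 hy hk1
    have nyc2 := nv y c2 hy hk2
    have nyc3 := nv y c3 hy hk3
    have nyc4 := nv y c4 hy hk4
    have nyc0 := nv y c0 hy hk0
    set W : G.Walk v v := Walk.cons b1v.symm (Walk.cons b1x (Walk.cons b2x.symm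
      (Walk.cons b2u (Walk.cons b3u.symm (Walk.cons b3y (Walk.cons b4y.symm
      (Walk.cons b4v Walk.nil))))))) with hW
    have hcyc : W.IsCycle :=
      ets_aux_cycle8 G v c1 x c2 u c3 y c4
        nvc1 hvx nvc2 hvu nvc3 hvy nvc4
        (fun h => nxc1 h.symm) d12 (fun h => nuc1 h.symm) d13 (fun h => nyc1 h.symm) d14
        nxc2 hux.symm nxc3 hxy nxc4
        (fun h => nuc2 h.symm) d23 (fun h => nyc2 h.symm) d24
        nuc3 huy nuc4
        (fun h => nyc3 h.symm) d34
        nyc4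
        b1v.symm b1x b2x.symm b2u b3u.symm b3y b4y.symm b4v
    have hsupp : W.support = [v, c1, x, c2, u, c3, y, c4, v] := by
      simp [hW, Walk.support_cons]
    have hvmem : v ∈ W.support := by rw [hsupp]; simp
    have humem : u ∈ W.support := by rw [hsupp]; simp
    have hc0nm : c0 ∉ W.support := by
      rw [hsupp]
      simp only [List.mem_cons, List.not_mem_nil, or_false]
      push_neg
      exact ⟨nvc0.symm, d01, nxc0.symm, d02, nuc0.symm, d03, nyc0.symm, ⟨d04, nvc0.symm⟩⟩
    exact h8 v W hcyc (by simp [hW]) (Or.inr ⟨c0, hc0nm, v, hvmem, u, humem, hvu, b0v, b0u⟩)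
  have hγv : ∀ w, isVar w → γ ≤ G.degree w := fun w hw => hγmin _ (hdegV w hw)
  -- there is a variable with no degree-1 check neighbor
  set Bad := (univ.filter isVar).filter (fun v => ∃ c, G.Adj v c ∧ G.degree c = 1) with hBad
  have hBadcard : Bad.card ≤ b := by
    rw [hb]
    have hexw : ∀ v : V, ∃ c, v ∈ Bad → ((¬ isVar c ∧ G.degree c = 1) ∧ G.Adj v c) := by
      intro v
      by_cases hv : v ∈ Bad
      · simp only [hBad, Finset.mem_filter, Finset.mem_univ, true_and] at hv
        obtain ⟨hvv, c, hadj, hdeg⟩ := hv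
        exact ⟨c, fun _ => ⟨⟨(hbip v c hadj).mp hvv, hdeg⟩, hadj⟩⟩
      · exact ⟨v, fun h => absurd h hv⟩
    choose f hf using hexw
    apply Finset.card_le_card_of_injOn f
    · intro v hv
      simp only [Finset.mem_coe, Finset.mem_filter, Finset.mem_univ, true_and]
      exact (hf v hv).1
    · intro p hp q hq hfe
      have hp' : p ∈ Bad := hp
      have hq' : q ∈ Bad := hq
      refine uniqN (f p) (hf p hp').1.2 p q (hf p hp').2.symm ?_
      rw [hfe]; exact (hf q hq').2.symm
  have hex : ∃ v, isVar v ∧ ¬ ∃ c, G.Adj v c ∧ G.degree c = 1 := by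
    by_contra h
    push_neg at h
    have hsub : (univ.filter isVar) ⊆ Bad := by
      intro w hw
      simp only [Finset.mem_filter, Finset.mem_univ, true_and] at hw
      simp only [hBad, Finset.mem_filter, Finset.mem_univ, true_and]
      exact ⟨hw, h w hw⟩
    have := Finset.card_le_card hsub
    omega
  obtain ⟨v, hv, hvleaf⟩ := hex
  -- the normal-graph neighborhood
  set NH : V → Finset V := fun w =>
    univ.filter (fun z => isVar z ∧ z ≠ w ∧ ∃ c, ¬ isVar c ∧ G.Adj w c ∧ G.Adj c z) with hNH
  have NHmem : ∀ w z : V, z ∈ NH w ↔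
      (isVar z ∧ z ≠ w ∧ ∃ c, ¬ isVar c ∧ G.Adj w c ∧ G.Adj c z) := by
    intro w z; simp [hNH]
  -- lower bound on normal-neighborhood size
  have L4 : ∀ w, isVar w →
      ((G.neighborFinset w).filter (fun c => ¬ G.degree c = 1)).card ≤ (NH w).card := by
    intro w hw
    have hex2 : ∀ c : V, ∃ z, c ∈ (G.neighborFinset w).filter (fun c => ¬ G.degree c = 1) →
        (z ≠ w ∧ G.Adj c z) := by
      intro c
      by_cases hc : c ∈ (G.neighborFinset w).filter (fun c => ¬ G.degree c = 1)
      · simp only [Finset.mem_filter, mem_neighborFinset] at hc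
        obtain ⟨hadj, hdeg⟩ := hc
        have hcv : ¬ isVar c := (hbip w c hadj).mp hw
        have hdeg2 : G.degree c = 2 := (hdegC c hcv).resolve_left hdeg
        have hwmem : w ∈ G.neighborFinset c := by
          simpa [mem_neighborFinset] using hadj.symm
        have hne : ((G.neighborFinset c).erase w).Nonempty := by
          apply Finset.card_pos.mp
          rw [Finset.card_erase_of_mem hwmem, card_neighborFinset_eq_degree, hdeg2]
          omega
        obtain ⟨z, hz⟩ := hne
        exact ⟨z, fun _ => ⟨(Finset.mem_erase.mp hz).1,
          by simpa [mem_neighborFinset] using (Finset.mem_erase.mp hz).2⟩⟩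
      · exact ⟨w, fun h => absurd h hc⟩
    choose f hf using hex2
    have hfne : ∀ c ∈ (G.neighborFinset w).filter (fun c => ¬ G.degree c = 1), f c ≠ w :=
      fun c hc => (hf c hc).1
    have hfadj : ∀ c ∈ (G.neighborFinset w).filter (fun c => ¬ G.degree c = 1), G.Adj c (f c) :=
      fun c hc => (hf c hc).2
    apply Finset.card_le_card_of_injOn f
    · intro c hc
      have hc' := hc
      simp only [Finset.mem_coe, Finset.mem_filter, mem_neighborFinset] at hc'
      have hcv : ¬ isVar c := (hbip w c hc'.1).mp hw
      rw [Finset.mem_coe, NHmem]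
      exact ⟨varOf c (f c) hcv (hfadj c hc), hfne c hc, c, hcv, hc'.1, hfadj c hc⟩
    · intro c hc c' hc' hfe
      have hcm : c ∈ (G.neighborFinset w).filter (fun c => ¬ G.degree c = 1) := hc
      have hcm' : c' ∈ (G.neighborFinset w).filter (fun c => ¬ G.degree c = 1) := hc'
      by_contra hne
      have haw : G.Adj w c := by
        simpa using (Finset.mem_filter.mp hcm).1
      have haw' : G.Adj w c' := by
        simpa using (Finset.mem_filter.mp hcm').1
      have hcv : ¬ isVar c := (hbip w c haw).mp hw
      have hcv' : ¬ isVar c' := (hbip w c' haw').mp hw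
      have hz : isVar (f c) := varOf c (f c) hcv (hfadj c hcm)
      have hadj2 : G.Adj (f c) c' := by
        rw [hfe]; exact (hfadj c' hcm').symm
      exact L3 w (f c) c c' hw hz hcv hcv' (hfne c hcm).symm hne haw haw'
        (hfadj c hcm).symm hadj2
  -- v has no degree-1 check neighbors, so NH v has ≥ γ elements
  have hvfull : γ ≤ (NH v).card := by
    have h0 : ((G.neighborFinset v).filter (fun c => G.degree c = 1)).card = 0 := by
      rw [Finset.card_eq_zero, Finset.filter_eq_empty_iff]
      intro c hc hdeg
      exact hvleaf ⟨c, by simpa [mem_neighborFinset] using hc, hdeg⟩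
    have hsplit := Finset.card_filter_add_card_filter_not
      (s := G.neighborFinset v) (p := fun c => G.degree c = 1)
    rw [card_neighborFinset_eq_degree] at hsplit
    have := L4 v hv
    have := hγv v hv
    omega
  by_cases hcase : ∃ u ∈ NH v, ((G.neighborFinset u).filter (fun c => G.degree c = 1)).card ≤ 1
  · -- Case A: some normal-neighbor u of v with at most one leaf check
    obtain ⟨u, huNH, hu1⟩ := hcase
    obtain ⟨hu, huv, c0, hk0, havc0, hc0u⟩ := (NHmem v u).mp huNH
    have hufull : γ - 1 ≤ (NH u).card := by
      have hsplit := Finset.card_filter_add_card_filter_not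
        (s := G.neighborFinset u) (p := fun c => G.degree c = 1)
      rw [card_neighborFinset_eq_degree] at hsplit
      have := L4 u hu
      have := hγv u hu
      omega
    have hint : (NH v ∩ NH u).card ≤ 1 := by
      rw [Finset.card_le_one]
      intro x hx y hy
      by_contra hxy
      obtain ⟨hxm, hxm'⟩ := Finset.mem_inter.mp hx
      obtain ⟨hym, hym'⟩ := Finset.mem_inter.mp hy
      obtain ⟨hxvar, hxv, c1, hk1, havc1, hc1x⟩ := (NHmem v x).mp hxm
      obtain ⟨_, hxu, c2, hk2, hauc2, hc2x⟩ := (NHmem u x).mp hxm'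
      obtain ⟨hyvar, hyv, c4, hk4, havc4, hc4y⟩ := (NHmem v y).mp hym
      obtain ⟨_, hyu, c3, hk3, hauc3, hc3y⟩ := (NHmem u y).mp hym'
      exact L8 v u x y c0 c1 c2 c3 c4 hv hu hxvar hyvar hk0 hk1 hk2 hk3 hk4
        huv.symm hxv.symm hyv.symm hxu.symm hyu.symm hxy
        havc0.symm hc0u havc1.symm hc1x hc2x hauc2.symm hauc3.symm hc3y hc4y havc4.symm
    have hsub : NH v ∪ NH u ⊆ univ.filter isVar := by
      intro z hz
      rcases Finset.mem_union.mp hz with h | h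
      · simp [((NHmem v z).mp h).1]
      · simp [((NHmem u z).mp h).1]
    have hle : (NH v ∪ NH u).card ≤ a := by
      rw [ha]; exact Finset.card_le_card hsub
    have hIE := Finset.card_union_add_card_inter (NH v) (NH u)
    omega
  · -- Case B: every normal-neighbor of v has ≥ 2 leaf checks
    push_neg at hcase
    set t : V → Finset V := fun u => (G.neighborFinset u).filter (fun c => G.degree c = 1)
      with ht
    have hdisj : ∀ u ∈ NH v, ∀ u' ∈ NH v, u ≠ u' → Disjoint (t u) (t u') := by
      intro u hu u' hu' hne
      rw [Finset.disjoint_left]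
      intro c hc hc'
      simp only [ht, Finset.mem_filter, mem_neighborFinset] at hc hc'
      exact hne (uniqN c hc.2 u u' hc.1.symm hc'.1.symm)
    have hsubB : (NH v).biUnion t ⊆ univ.filter (fun w => ¬ isVar w ∧ G.degree w = 1) := by
      intro c hc
      obtain ⟨u, hu, hcu⟩ := Finset.mem_biUnion.mp hc
      simp only [ht, Finset.mem_filter, mem_neighborFinset] at hcu
      have huvar : isVar u := ((NHmem v u).mp hu).1
      simp only [Finset.mem_filter, Finset.mem_univ, true_and]
      exact ⟨(hbip u c hcu.1).mp huvar, hcu.2⟩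
    have hcardB : 2 * γ ≤ b := by
      have h1 : ((NH v).biUnion t).card ≤ b := by
        rw [hb]; exact Finset.card_le_card hsubB
      rw [Finset.card_biUnion hdisj] at h1
      have h2 : (NH v).card • 2 ≤ ∑ u ∈ NH v, (t u).card :=
        Finset.card_nsmul_le_sum _ _ _ (fun u hu => hcase u hu)
      simp only [smul_eq_mul] at h2
      omega
    omega
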